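/- Let q^w, q^l : [0,∞) → [0,∞) be nondecreasing continuous functions with q^w(0) = q^l(0) = 0 and q^l(x) ≤ θ·q^w(x) for all x ≥ 0, where θ ∈ [0,1). Let p be a nonnegative random variable with CDF F, and let v ≥ 0. Then sup_{a ≥ 0} [F(a)·(v − q^w(a) + q^l(a)) − q^l(a)] + E[q^w(p)] ≥ λ(θ)·v, where λ(θ) = (θ² − θ + 1 − e^{θ−1})/(θ − 1)² (the inequality is trivial when E[q^w(p)] = ∞). -/

import Mathlib

open MeasureTheory

lemma aux_exp (θ u : ℝ) (hu : 0 < u) : u * (θ - Real.log u) ≤ Real.exp (θ - 1) := by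
  have h := Real.add_one_le_exp (θ - 1 - Real.log u)
  have he : Real.exp (θ - 1 - Real.log u) = Real.exp (θ - 1) / u := by
    rw [Real.exp_sub, Real.exp_log hu]
  rw [he, le_div_iff₀ hu] at h
  nlinarith [h]

lemma aux_lam_le_one (θ : ℝ) (hθ1 : θ < 1) :
    (θ ^ 2 - θ + 1 - Real.exp (θ - 1)) / (θ - 1) ^ 2 ≤ 1 := by
  have h := Real.add_one_le_exp (θ - 1)
  rw [div_le_one (pow_two_pos_of_ne_zero (by linarith : θ - 1 ≠ 0))]
  nlinarith

lemma aux_final (θ v S : ℝ) (hθ0 : 0 ≤ θ) (hθ1 : θ < 1) (hv : 0 < v) (hS0 : 0 ≤ S)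
    (hSv : S < v) (hd : 0 < θ * v + (1 - θ) * S) :
    ((θ ^ 2 - θ + 1 - Real.exp (θ - 1)) / (θ - 1) ^ 2) * v ≤
      S + ((v - S) / (1 - θ)
        + ((θ * v + (1 - θ) * S) / (1 - θ) ^ 2)
            * (Real.log (θ * v + (1 - θ) * S) - Real.log v)) := by
  have hb : (0:ℝ) < 1 - θ := by linarith
  set d := θ * v + (1 - θ) * S with hd_def
  set u := d / v with hu_def
  have hu : 0 < u := div_pos hd hv
  have huv : u * v = d := div_mul_cancel₀ d hv.ne'
  have hlog : Real.log d - Real.log v = Real.log u := by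
    rw [hu_def, Real.log_div hd.ne' hv.ne']
  have key := aux_exp θ u hu
  have key2 : d * θ - d * Real.log u ≤ Real.exp (θ - 1) * v := by
    have h : d * (θ - Real.log u) ≤ Real.exp (θ - 1) * v := by
      calc d * (θ - Real.log u) = (u * (θ - Real.log u)) * v := by rw [← huv]; ring
        _ ≤ Real.exp (θ - 1) * v := mul_le_mul_of_nonneg_right key hv.le
    linarith [h, mul_comm d (Real.log u)]
  rw [hlog, div_mul_eq_mul_div,
    div_le_iff₀ (pow_two_pos_of_ne_zero (by linarith : θ - 1 ≠ 0))]
  have expand : (S + ((v - S) / (1 - θ) + (d / (1 - θ) ^ 2) * Real.log u)) * (θ - 1) ^ 2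
      = S * (1 - θ) ^ 2 + (v - S) * (1 - θ) + d * Real.log u := by
    field_simp
    ring
  rw [expand]
  have e2 : S * (1 - θ) ^ 2 + (v - S) * (1 - θ) + d * θ = (θ ^ 2 - θ + 1) * v := by
    rw [hd_def]; ring
  linarith [key2, e2]

lemma aux_integral (b d m : ℝ) (hb : 0 < b) (hd : 0 < d) (hm : 0 < m) :
    ∫ t in (0:ℝ)..m, (m - t) / (b * m + d - b * t)
      = m / b + (d / b ^ 2) * (Real.log d - Real.log (b * m + d)) := by
  set c := b * m + d with hc_def
  have hct : ∀ t ∈ Set.uIcc (0:ℝ) m, 0 < c - b * t := by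
    intro t ht
    rw [Set.uIcc_of_le hm.le] at ht
    have : b * t ≤ b * m := mul_le_mul_of_nonneg_left ht.2 hb.le
    simp only [hc_def]; nlinarith
  have hderiv : ∀ t ∈ Set.uIcc (0:ℝ) m,
      HasDerivAt (fun t => t / b + (d / b ^ 2) * Real.log (c - b * t))
        ((m - t) / (c - b * t)) t := by
    intro t ht
    have hct' := hct t ht
    have h1 : HasDerivAt (fun t : ℝ => c - b * t) (-b) t := by
      simpa using ((hasDerivAt_id t).const_mul b).const_sub c
    have h2 : HasDerivAt (fun t : ℝ => Real.log (c - b * t)) ((c - b * t)⁻¹ * (-b)) t :=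
      by rw [inv_mul_eq_div]; exact h1.log hct'.ne'
    have h3 : HasDerivAt (fun t : ℝ => t / b + (d / b ^ 2) * Real.log (c - b * t))
        (1 / b + (d / b ^ 2) * ((c - b * t)⁻¹ * (-b))) t :=
      ((hasDerivAt_id t).div_const b).add (h2.const_mul (d / b ^ 2))
    convert h3 using 1
    rw [hc_def] at hct' ⊢
    have hB : b * m + d - b * t ≠ 0 := hct'.ne'
    field_simp
    have hX : (m * b - t * b + d) * (m * b - t * b + d)⁻¹ = 1 :=
      mul_inv_cancel₀ (by intro h; apply hB; linarith)
    linear_combination hX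
  have hint : IntervalIntegrable (fun t => (m - t) / (c - b * t)) volume 0 m := by
    apply ContinuousOn.intervalIntegrable
    apply ContinuousOn.div
    · fun_prop
    · fun_prop
    · intro t ht; exact (hct t ht).ne'
  have heq := intervalIntegral.integral_eq_sub_of_hasDerivAt hderiv hint
  rw [heq]
  have h0 : c - b * 0 = c := by ring
  have hcm : c - b * m = d := by rw [hc_def]; ring
  rw [h0, hcm]
  ring

set_option maxHeartbeats 2000000 in
theorem stmt_10
    (θ : ℝ) (hθ0 : 0 ≤ θ) (hθ1 : θ < 1)
    (qw ql : ℝ → ℝ)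
    (hqw_mono : ∀ x y, 0 ≤ x → x ≤ y → qw x ≤ qw y)
    (hql_mono : ∀ x y, 0 ≤ x → x ≤ y → ql x ≤ ql y)
    (hqw_cont : ContinuousOn qw (Set.Ici 0))
    (hql_cont : ContinuousOn ql (Set.Ici 0))
    (hqw0 : qw 0 = 0) (hql0 : ql 0 = 0)
    (hql_nonneg : ∀ x, 0 ≤ x → 0 ≤ ql x)
    (hql_le : ∀ x, 0 ≤ x → ql x ≤ θ * qw x)
    {Ω : Type*} [MeasurableSpace Ω] (μ : Measure Ω) [IsProbabilityMeasure μ]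
    (p : Ω → ℝ) (hp_meas : Measurable p) (hp_nonneg : ∀ ω, 0 ≤ p ω)
    (F : ℝ → ℝ) (hF : ∀ x, F x = (μ {ω | p ω ≤ x}).toReal)
    (v : ℝ) (hv : 0 ≤ v) :
    ENNReal.ofReal
        (sSup {y : ℝ | ∃ a : ℝ, 0 ≤ a ∧ y = F a * (v - qw a + ql a) - ql a})
        + ∫⁻ ω, ENNReal.ofReal (qw (p ω)) ∂μ
      ≥ ENNReal.ofReal
          (((θ ^ 2 - θ + 1 - Real.exp (θ - 1)) / (θ - 1) ^ 2) * v) := by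
  have hb : (0:ℝ) < 1 - θ := by linarith
  set lam := (θ ^ 2 - θ + 1 - Real.exp (θ - 1)) / (θ - 1) ^ 2 with hlam_def
  have hlam1 : lam ≤ 1 := aux_lam_le_one θ hθ1
  -- measurability of qw ∘ p
  have hq_meas : Measurable (fun ω => qw (p ω)) := by
    have hcont : Continuous (fun x : ℝ => qw (max x 0)) :=
      hqw_cont.comp_continuous (continuous_id.max continuous_const)
        (fun x => Set.mem_Ici.mpr (le_max_right x 0))
    have heq : (fun ω => qw (p ω)) = (fun x : ℝ => qw (max x 0)) ∘ p := by
      funext ω; simp [max_eq_left (hp_nonneg ω)]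
    rw [heq]; exact hcont.measurable.comp hp_meas
  have hqw_nonneg : ∀ x, 0 ≤ x → 0 ≤ qw x := fun x hx => hqw0 ▸ hqw_mono 0 x le_rfl hx
  -- F basic facts
  have hF0 : ∀ a : ℝ, 0 ≤ F a := fun a => (hF a) ▸ ENNReal.toReal_nonneg
  have hF1 : ∀ a : ℝ, F a ≤ 1 := by
    intro a
    rw [hF a]
    have h := prob_le_one (μ := μ) (s := {ω | p ω ≤ a})
    simpa using ENNReal.toReal_mono (by simp) h
  -- the sup
  set Sset := {y : ℝ | ∃ a : ℝ, 0 ≤ a ∧ y = F a * (v - qw a + ql a) - ql a} with hSset_def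
  have hne : Sset.Nonempty := ⟨F 0 * (v - qw 0 + ql 0) - ql 0, 0, le_rfl, rfl⟩
  have hbdd : BddAbove Sset := by
    refine ⟨v, ?_⟩
    rintro y ⟨a, ha, rfl⟩
    have h1 := hF0 a
    have h2 := hF1 a
    have h3 := hqw_nonneg a ha
    have h4 := hql_nonneg a ha
    have h5 := hql_le a ha
    nlinarith [mul_nonneg h1 (sub_nonneg.mpr (le_trans h5 (by nlinarith : θ * qw a ≤ qw a))),
      mul_le_mul_of_nonneg_right h2 hv]
  set S := sSup Sset with hS_def
  have hS_ge : ∀ a : ℝ, 0 ≤ a → F a * (v - qw a + ql a) - ql a ≤ S :=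
    fun a ha => le_csSup hbdd ⟨a, ha, rfl⟩
  have hS_nonneg : 0 ≤ S := by
    have h := hS_ge 0 le_rfl
    have := hF0 0
    rw [hqw0, hql0] at h
    nlinarith [mul_nonneg (hF0 0) hv]
  have hkey : ∀ a : ℝ, 0 ≤ a → F a * v - (θ + (1 - θ) * F a) * qw a ≤ S := by
    intro a ha
    have h := hS_ge a ha
    nlinarith [mul_nonneg (sub_nonneg.mpr (hF1 a)) (sub_nonneg.mpr (hql_le a ha))]
  clear hS_def hSset_def
  clear_value lam S Sset
  -- case v = 0
  rcases eq_or_lt_of_le hv with hv0 | hv0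
  · rw [← hv0]
    simp only [mul_zero, ENNReal.ofReal_zero, ge_iff_le]
    exact zero_le
  -- case v ≤ S
  by_cases hSv : v ≤ S
  · have h1 : lam * v ≤ S := le_trans (by nlinarith : lam * v ≤ v) hSv
    exact le_trans (ENNReal.ofReal_le_ofReal h1) le_self_add
  push_neg at hSv
  set m := v - S with hm_def
  clear_value m
  have hm : 0 < m := by rw [hm_def]; linarith
  -- Claim A
  have claimA : ∀ t ∈ Set.Ioo (0:ℝ) m,
      ENNReal.ofReal ((m - t) / (v - (1 - θ) * t)) ≤ μ {ω | t < qw (p ω)} := by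
    intro t ht
    obtain ⟨ht0, htm⟩ := ht
    have htv : t < v := by rw [hm_def] at htm; linarith
    have hden : 0 < v - (1 - θ) * t := by nlinarith
    set T := {a : ℝ | 0 ≤ a ∧ qw a ≤ t} with hT_def
    have hT0 : (0:ℝ) ∈ T := ⟨le_rfl, by rw [hqw0]; exact ht0.le⟩
    by_cases hbddT : BddAbove T
    · -- bounded case
      set A := sSup T with hA_def
      have hA0 : 0 ≤ A := le_csSup hbddT hT0
      have hqwA : qw A ≤ t := by
        obtain ⟨useq, hmono_u, htend, hmem⟩ := exists_seq_tendsto_sSup ⟨0, hT0⟩ hbddT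
        have hc : ContinuousWithinAt qw (Set.Ici 0) A := hqw_cont A (Set.mem_Ici.mpr hA0)
        have h1 : Filter.Tendsto (fun n => qw (useq n)) Filter.atTop (nhds (qw A)) :=
          hc.tendsto.comp (tendsto_nhdsWithin_of_tendsto_nhds_of_eventually_within useq htend
            (Filter.Eventually.of_forall (fun n => Set.mem_Ici.mpr (hmem n).1)))
        exact le_of_tendsto h1 (Filter.Eventually.of_forall (fun n => (hmem n).2))
      have hFA : F A ≤ (S + θ * t) / (v - (1 - θ) * t) := by
        have h1 := hkey A hA0
        have hc : 0 ≤ θ + (1 - θ) * F A := by nlinarith [hF0 A]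
        have h2 : F A * v - (θ + (1 - θ) * F A) * t ≤ S := by
          nlinarith [mul_le_mul_of_nonneg_left hqwA hc]
        rw [le_div_iff₀ hden]
        nlinarith [h2]
      have hsub : {ω | qw (p ω) ≤ t} ⊆ {ω | p ω ≤ A} :=
        fun ω hω => le_csSup hbddT ⟨hp_nonneg ω, hω⟩
      have hμA : μ {ω | p ω ≤ A} = ENNReal.ofReal (F A) := by
        rw [hF A, ENNReal.ofReal_toReal (measure_ne_top μ _)]
      have hmeas_set : MeasurableSet {ω | qw (p ω) ≤ t} := hq_meas measurableSet_Iic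
      have hcompl : {ω | t < qw (p ω)} = {ω | qw (p ω) ≤ t}ᶜ := by
        ext ω; simp [not_le]
      rw [hcompl, prob_compl_eq_one_sub hmeas_set]
      have h5 : μ {ω | qw (p ω) ≤ t} ≤ ENNReal.ofReal ((S + θ * t) / (v - (1 - θ) * t)) :=
        calc μ {ω | qw (p ω) ≤ t} ≤ μ {ω | p ω ≤ A} := measure_mono hsub
          _ = ENNReal.ofReal (F A) := hμA
          _ ≤ _ := ENNReal.ofReal_le_ofReal hFA
      have hφ_nonneg : 0 ≤ (S + θ * t) / (v - (1 - θ) * t) :=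
        div_nonneg (by nlinarith) hden.le
      have hid : (m - t) / (v - (1 - θ) * t) = 1 - (S + θ * t) / (v - (1 - θ) * t) := by
        rw [eq_sub_iff_add_eq, ← add_div, hm_def, div_eq_one_iff_eq hden.ne']
        ring
      rw [hid, ENNReal.ofReal_sub 1 hφ_nonneg, ENNReal.ofReal_one]
      exact tsub_le_tsub_left h5 1
    · -- unbounded case: contradiction
      exfalso
      have hall : ∀ a : ℝ, 0 ≤ a → qw a ≤ t := by
        intro a ha
        obtain ⟨a', ha'T, haa'⟩ := not_bddAbove_iff.mp hbddT a
        exact le_trans (hqw_mono a a' ha haa'.le) ha'T.2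
      have hunion : (⋃ n : ℕ, {ω | p ω ≤ (n:ℝ)}) = Set.univ := by
        ext ω
        simp only [Set.mem_iUnion, Set.mem_setOf_eq, Set.mem_univ, iff_true]
        exact exists_nat_ge (p ω)
      have hmono_s : Monotone (fun n : ℕ => {ω | p ω ≤ (n:ℝ)}) := by
        intro i j hij ω hω
        have hω' : p ω ≤ (i:ℝ) := hω
        exact le_trans hω' (Nat.cast_le.mpr hij)
      have h1 : Filter.Tendsto (fun n : ℕ => μ {ω | p ω ≤ (n:ℝ)}) Filter.atTop
          (nhds (1 : ENNReal)) := by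
        have h0 : Filter.Tendsto (⇑μ ∘ fun n : ℕ => {ω | p ω ≤ (n:ℝ)}) Filter.atTop
            (nhds (μ (⋃ n : ℕ, {ω | p ω ≤ (n:ℝ)}))) := tendsto_measure_iUnion_atTop hmono_s
        rw [hunion, measure_univ] at h0
        exact h0
      have hFn : Filter.Tendsto (fun n : ℕ => F (n : ℝ)) Filter.atTop (nhds 1) := by
        have h2 := (ENNReal.tendsto_toReal (by simp : (1:ENNReal) ≠ ⊤)).comp h1
        simp only [ENNReal.toReal_one, Function.comp_def] at h2
        simpa only [← hF] using h2
      have hineq : ∀ n : ℕ, F (n:ℝ) * v - (θ + (1 - θ) * F (n:ℝ)) * t ≤ S := by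
        intro n
        have h1' := hkey (n:ℝ) (Nat.cast_nonneg n)
        have h2' : qw (n:ℝ) ≤ t := hall (n:ℝ) (Nat.cast_nonneg n)
        have hc : 0 ≤ θ + (1 - θ) * F (n:ℝ) :=
          add_nonneg hθ0 (mul_nonneg hb.le (hF0 (n:ℝ)))
        nlinarith [mul_le_mul_of_nonneg_left h2' hc]
      have hlim : Filter.Tendsto (fun n : ℕ => F (n:ℝ) * v - (θ + (1 - θ) * F (n:ℝ)) * t)
          Filter.atTop (nhds (1 * v - (θ + (1 - θ) * 1) * t)) :=
        (hFn.mul_const v).sub ((tendsto_const_nhds.add (hFn.const_mul (1 - θ))).mul_const t)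
      have hvt : 1 * v - (θ + (1 - θ) * 1) * t ≤ S :=
        le_of_tendsto hlim (Filter.Eventually.of_forall hineq)
      rw [hm_def] at htm
      nlinarith [hvt]
  -- layer cake
  have hlayer : ∫⁻ ω, ENNReal.ofReal (qw (p ω)) ∂μ = ∫⁻ t in Set.Ioi 0, μ {ω | t < qw (p ω)} :=
    lintegral_eq_lintegral_meas_lt μ
      (Filter.Eventually.of_forall (fun ω => hqw_nonneg _ (hp_nonneg ω))) hq_meas.aemeasurable
  have hmeas_g : Measurable (fun t : ℝ => μ {ω | t < qw (p ω)}) := by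
    apply Antitone.measurable
    intro t1 t2 h12
    exact measure_mono (fun ω hω => lt_of_le_of_lt h12 hω)
  have hmono_int : ∫⁻ t in Set.Ioo 0 m, ENNReal.ofReal ((m - t) / (v - (1 - θ) * t))
      ≤ ∫⁻ t in Set.Ioi 0, μ {ω | t < qw (p ω)} :=
    calc ∫⁻ t in Set.Ioo 0 m, ENNReal.ofReal ((m - t) / (v - (1 - θ) * t))
        ≤ ∫⁻ t in Set.Ioo 0 m, μ {ω | t < qw (p ω)} := setLIntegral_mono hmeas_g claimA
      _ ≤ ∫⁻ t in Set.Ioi 0, μ {ω | t < qw (p ω)} :=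
          lintegral_mono_set (fun t ht => ht.1)
  rw [ge_iff_le, hlayer]
  set d := θ * v + (1 - θ) * S with hd_def
  clear_value d
  have hd_nonneg : 0 ≤ d := by
    rw [hd_def]
    exact add_nonneg (mul_nonneg hθ0 hv0.le) (mul_nonneg hb.le hS_nonneg)
  rcases eq_or_lt_of_le hd_nonneg with hd0 | hd0
  · -- degenerate case: θ = 0 and S = 0
    have hA : θ * v = 0 := le_antisymm
      (by linarith [mul_nonneg hb.le hS_nonneg]) (mul_nonneg hθ0 hv0.le)
    have hB : (1 - θ) * S = 0 := le_antisymm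
      (by linarith [mul_nonneg hθ0 hv0.le]) (mul_nonneg hb.le hS_nonneg)
    have hθz : θ = 0 := by
      rcases mul_eq_zero.mp hA with h | h
      · exact h
      · exact absurd h hv0.ne'
    have hSz : S = 0 := by
      rcases mul_eq_zero.mp hB with h | h
      · exact absurd h hb.ne'
      · exact h
    have hm_eq : m = v := by rw [hm_def, hSz, sub_zero]
    have hbound : ENNReal.ofReal v ≤ ∫⁻ t in Set.Ioi 0, μ {ω | t < qw (p ω)} := by
      have hone : ∀ t ∈ Set.Ioo (0:ℝ) m, (1:ENNReal) ≤ μ {ω | t < qw (p ω)} := by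
        intro t ht
        have := claimA t ht
        have hident : (m - t) / (v - (1 - θ) * t) = 1 := by
          rw [hθz, hm_eq]
          have : v - t ≠ 0 := by
            rw [hm_eq] at ht
            have := ht.2; intro h; nlinarith [this]
          rw [sub_zero, one_mul]; exact div_self this
        rw [hident, ENNReal.ofReal_one] at this
        exact this
      calc ENNReal.ofReal v = volume (Set.Ioo (0:ℝ) m) := by
            rw [Real.volume_Ioo, hm_eq, sub_zero]
        _ = ∫⁻ t in Set.Ioo (0:ℝ) m, 1 := (setLIntegral_one _).symm
        _ ≤ ∫⁻ t in Set.Ioo (0:ℝ) m, μ {ω | t < qw (p ω)} := setLIntegral_mono hmeas_g hone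
        _ ≤ _ := lintegral_mono_set (fun t ht => ht.1)
    calc ENNReal.ofReal (lam * v) ≤ ENNReal.ofReal v := by
          apply ENNReal.ofReal_le_ofReal; nlinarith
      _ ≤ ∫⁻ t in Set.Ioi 0, μ {ω | t < qw (p ω)} := hbound
      _ ≤ _ := le_add_self
  · -- main case: d > 0
    have hveq : v = (1 - θ) * m + d := by rw [hm_def, hd_def]; ring
    have hIval : ∫ t in (0:ℝ)..m, (m - t) / (v - (1 - θ) * t)
        = m / (1 - θ) + (d / (1 - θ) ^ 2) * (Real.log d - Real.log v) := by
      have := aux_integral (1 - θ) d m hb hd0 hm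
      calc ∫ t in (0:ℝ)..m, (m - t) / (v - (1 - θ) * t)
          = ∫ t in (0:ℝ)..m, (m - t) / ((1 - θ) * m + d - (1 - θ) * t) := by
            rw [← hveq]
        _ = m / (1 - θ) + (d / (1 - θ) ^ 2) * (Real.log d - Real.log ((1 - θ) * m + d)) := this
        _ = m / (1 - θ) + (d / (1 - θ) ^ 2) * (Real.log d - Real.log v) := by rw [← hveq]
    have hIoo_eq : ∫ t in Set.Ioo (0:ℝ) m, (m - t) / (v - (1 - θ) * t)
        = ∫ t in (0:ℝ)..m, (m - t) / (v - (1 - θ) * t) := by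
      rw [intervalIntegral.integral_of_le hm.le, integral_Ioc_eq_integral_Ioo]
    have hden_pos : ∀ t ∈ Set.Icc (0:ℝ) m, 0 < v - (1 - θ) * t := by
      intro t ht
      have : (1 - θ) * t ≤ (1 - θ) * m := mul_le_mul_of_nonneg_left ht.2 hb.le
      nlinarith [hveq]
    have hf_int : IntegrableOn (fun t => (m - t) / (v - (1 - θ) * t)) (Set.Ioo 0 m) volume := by
      have hii : IntervalIntegrable (fun t => (m - t) / (v - (1 - θ) * t)) volume 0 m := by
        apply ContinuousOn.intervalIntegrable
        apply ContinuousOn.div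
        · fun_prop
        · fun_prop
        · intro t ht
          rw [Set.uIcc_of_le hm.le] at ht
          exact (hden_pos t ht).ne'
      exact ((intervalIntegrable_iff_integrableOn_Ioc_of_le hm.le).mp hii).mono_set
        Set.Ioo_subset_Ioc_self
    have hf_nn : 0 ≤ᵐ[volume.restrict (Set.Ioo 0 m)]
        (fun t => (m - t) / (v - (1 - θ) * t)) := by
      filter_upwards [ae_restrict_mem measurableSet_Ioo] with t ht
      exact div_nonneg (by linarith [ht.2]) (hden_pos t ⟨ht.1.le, ht.2.le⟩).le
    have h6 : ENNReal.ofReal (∫ t in Set.Ioo (0:ℝ) m, (m - t) / (v - (1 - θ) * t))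
        = ∫⁻ t in Set.Ioo (0:ℝ) m, ENNReal.ofReal ((m - t) / (v - (1 - θ) * t)) :=
      ofReal_integral_eq_lintegral_ofReal hf_int hf_nn
    have hJ : lam * v ≤ S + ∫ t in Set.Ioo (0:ℝ) m, (m - t) / (v - (1 - θ) * t) := by
      rw [hIoo_eq, hIval]
      rw [hd_def] at hd0
      have h := aux_final θ v S hθ0 hθ1 hv0 hS_nonneg hSv hd0
      rw [hlam_def, hm_def, hd_def]
      exact h
    calc ENNReal.ofReal (lam * v)
        ≤ ENNReal.ofReal (S + ∫ t in Set.Ioo (0:ℝ) m, (m - t) / (v - (1 - θ) * t)) :=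
          ENNReal.ofReal_le_ofReal hJ
      _ ≤ ENNReal.ofReal S
          + ENNReal.ofReal (∫ t in Set.Ioo (0:ℝ) m, (m - t) / (v - (1 - θ) * t)) :=
          ENNReal.ofReal_add_le
      _ = ENNReal.ofReal S
          + ∫⁻ t in Set.Ioo (0:ℝ) m, ENNReal.ofReal ((m - t) / (v - (1 - θ) * t)) := by
          rw [h6]
      _ ≤ ENNReal.ofReal S + ∫⁻ t in Set.Ioi 0, μ {ω | t < qw (p ω)} :=
          add_le_add le_rfl hmono_int
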